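/- Define a colouring c of the hyperplanes of a finite-dimensional CAT(0) cube complex inductively by: c(h) = 1 if all r-maximal predecessors of h are coloured 0, and c(h) = 0 otherwise, where r is the (lexicographically ordered) rank-vector. Then: (1) if h has a predecessor of the same colour as h, it also has a predecessor of the opposite colour; and (2) if h has a predecessor k with r(k) = r(h), then c(k) ≠ c(h). -/

import Mathlib

/-- The lexicographic linear order on `ℕ^n`, used for rank-vectors. -/
noncomputable instance lexNatLinearOrder (n : ℕ) : LinearOrder (Lex (Fin n → ℕ)) :=
  letI h : WellFoundedLT (Fin n) := inferInstance
  @Pi.Lex.linearOrder (Fin n) (fun _ => ℕ) _ h _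

/-- Abstractly: `H` is the set of hyperplanes of a finite-dimensional CAT(0) cube complex with
the strict order `lt` ("separates the basepoint from"), `r` is the rank-vector function with
values in `ℕ^{D-1}` ordered lexicographically, which is monotonic and such that each hyperplane
has finitely many predecessors and at most one predecessor of the same rank-vector.  If
`c : H → Bool` satisfies the defining recurrence of the colouring — `c h = 1` iff all
`r`-maximal predecessors of `h` are coloured `0` — then: (1) if `h` has a predecessor of its
own colour it also has one of the opposite colour; (2) a predecessor with the same rank-vector
as `h` has the opposite colour. -/
theorem stmt18 {H : Type*} (D : ℕ) (lt : H → H → Prop)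
    (hirr : ∀ h, ¬ lt h h) (htrans : ∀ {a b c}, lt a b → lt b c → lt a c)
    (r : H → Lex (Fin (D - 1) → ℕ))
    (pred : H → H → Prop)
    (hpred : ∀ k h, pred k h ↔ (lt k h ∧ ¬ ∃ j, lt k j ∧ lt j h))
    (hfin : ∀ h, {k | pred k h}.Finite)
    (hmono : ∀ k h, lt k h → r k ≤ r h)
    (huniq : ∀ h k j, pred k h → pred j h → r k = r h → r j = r h → k = j)
    (c : H → Bool)
    (hrec : ∀ h, c h = true ↔
      ∀ k, (pred k h ∧ ∀ j, pred j h → r j ≤ r k) → c k = false) :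
    (∀ h, (∃ k, pred k h ∧ c k = c h) → ∃ j, pred j h ∧ c j ≠ c h) ∧
    (∀ h k, pred k h → r k = r h → c k ≠ c h) := by
  have key : ∀ h, (∃ k, pred k h) → ∃ m, pred m h ∧ ∀ j, pred j h → r j ≤ r m := by
    rintro h ⟨k, hk⟩
    obtain ⟨m, hm, hmax⟩ := (hfin h).exists_maximalFor r _ ⟨k, hk⟩
    refine ⟨m, hm, fun j hj => ?_⟩
    rcases le_total (r j) (r m) with h1 | h1
    · exact h1
    · exact hmax hj h1
  have part2 : ∀ h k, pred k h → r k = r h → c k ≠ c h := by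
    intro h k hk hrk
    have hkmax : ∀ j, pred j h → r j ≤ r k := by
      intro j hj
      rw [hrk]
      exact hmono j h ((hpred j h).1 hj).1
    cases hch : c h with
    | true =>
      have := (hrec h).1 hch k ⟨hk, hkmax⟩
      simp [this]
    | false =>
      have hne : ¬ (c h = true) := by simp [hch]
      rw [hrec h] at hne
      push_neg at hne
      obtain ⟨m, ⟨hm, hmmax⟩, hcm⟩ := hne
      have hrm : r m = r h := le_antisymm (hmono m h ((hpred m h).1 hm).1) (hrk ▸ hmmax k hk)
      have : m = k := huniq h m k hm hk hrm hrk
      subst this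
      simp only [Bool.not_eq_false] at hcm
      simp [hcm]
  refine ⟨?_, part2⟩
  rintro h ⟨k, hk, hck⟩
  cases hch : c h with
  | true =>
    obtain ⟨m, hm, hmmax⟩ := key h ⟨k, hk⟩
    refine ⟨m, hm, ?_⟩
    have := (hrec h).1 hch m ⟨hm, hmmax⟩
    simp [this]
  | false =>
    have hne : ¬ (c h = true) := by simp [hch]
    rw [hrec h] at hne
    push_neg at hne
    obtain ⟨m, hm, hcm⟩ := hne
    simp only [Bool.not_eq_false] at hcm
    exact ⟨m, hm.1, by simp [hcm]⟩
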